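/- Let c be the infimum, over pairs (ρ_{12}, ρ_{23}) of density operators on ℂ²⊗ℂ² satisfying the consistency condition Tr_1[ρ_{12}] = Tr_3[ρ_{23}] and the weak monotonicity constraint S(2|1)_{ρ_{12}} + S(2|3)_{ρ_{23}} ≥ 0, of −(1/2)(⟨ψ⁻|ρ_{12}|ψ⁻⟩ + ⟨ψ⁻|ρ_{23}|ψ⁻⟩). Then for every finite connected simple graph G = (V,E) with |E| ≥ 1 and every family (ρ_e)_{e∈E} of two-qubit density operators indexed by the edges of G that is locally consistent (for every vertex v and every two edges e, e' containing v, the one-body marginal of ρ_e at v equals that of ρ_{e'}) and satisfies all weak monotonicity constraints S(v|j)_{ρ_{vj}} + S(v|k)_{ρ_{vk}} ≥ 0 for every vertex v and distinct edges vj, vk ∈ E, one has Σ_{e∈E} Tr[(−|ψ⁻⟩⟨ψ⁻|) ρ_e] ≥ 2c·⌊|E|/2⌋ − (|E| mod 2). -/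

import Mathlib

open scoped Matrix Kronecker ComplexOrder

noncomputable section

def IsDensityOp {n : Type*} [Fintype n] [DecidableEq n] (ρ : Matrix n n ℂ) : Prop :=
  ρ.PosSemidef ∧ ρ.trace = 1

/-- Von Neumann entropy of a (Hermitian) matrix: `-∑ λᵢ log λᵢ`. -/
noncomputable def vNE {n : Type*} [Fintype n] [DecidableEq n] (ρ : Matrix n n ℂ) : ℝ :=
  if h : ρ.IsHermitian then -∑ i, h.eigenvalues i * Real.log (h.eigenvalues i) else 0

/-- Partial trace over the first tensor factor. -/
noncomputable def ptraceL {a b : Type*} [Fintype a] [Fintype b]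
    (ρ : Matrix (a × b) (a × b) ℂ) : Matrix b b ℂ :=
  Matrix.of fun i j => ∑ k : a, ρ (k, i) (k, j)

/-- Partial trace over the second tensor factor. -/
noncomputable def ptraceR {a b : Type*} [Fintype a] [Fintype b]
    (ρ : Matrix (a × b) (a × b) ℂ) : Matrix a a ℂ :=
  Matrix.of fun i j => ∑ k : b, ρ (i, k) (j, k)

end
noncomputable section

/-- The two-qubit singlet state `|ψ⁻⟩ = (|01⟩ - |10⟩)/√2`. -/
noncomputable def psiMinus : Fin 2 × Fin 2 → ℂ :=
  fun p => if p = (0, 1) then (Real.sqrt 2 : ℂ)⁻¹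
    else if p = (1, 0) then -(Real.sqrt 2 : ℂ)⁻¹ else 0

/-- The rank-one projector `|ψ⁻⟩⟨ψ⁻|` onto the singlet state. -/
noncomputable def singletProj : Matrix (Fin 2 × Fin 2) (Fin 2 × Fin 2) ℂ :=
  Matrix.of fun p q => psiMinus p * (starRingEnd ℂ) (psiMinus q)

/-- `c`: the infimum over pairs `(ρ₁₂, ρ₂₃)` of two-qubit density operators with
`Tr₁[ρ₁₂] = Tr₃[ρ₂₃]` and `S(2|1)_{ρ₁₂} + S(2|3)_{ρ₂₃} ≥ 0` of
`-(1/2)(⟨ψ⁻|ρ₁₂|ψ⁻⟩ + ⟨ψ⁻|ρ₂₃|ψ⁻⟩)`. -/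
noncomputable def cWM : ℝ :=
  sInf { x : ℝ | ∃ ρ12 ρ23 : Matrix (Fin 2 × Fin 2) (Fin 2 × Fin 2) ℂ,
    IsDensityOp ρ12 ∧ IsDensityOp ρ23 ∧
    ptraceL ρ12 = ptraceR ρ23 ∧
    0 ≤ (vNE ρ12 - vNE (ptraceR ρ12)) + (vNE ρ23 - vNE (ptraceL ρ23)) ∧
    x = -(1 / 2) * ((Matrix.trace (singletProj * ρ12)).re
      + (Matrix.trace (singletProj * ρ23)).re) }

open Polynomial Matrix in
lemma charpoly_hermitian {n : Type*} [Fintype n] [DecidableEq n]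
    {A : Matrix n n ℂ} (hA : A.IsHermitian) :
    A.charpoly = ∏ i, (X - C ((hA.eigenvalues i : ℝ) : ℂ)) := by
  have hs := hA.spectral_theorem
  set U : Matrix n n ℂ := (hA.eigenvectorUnitary : Matrix n n ℂ) with hU
  have hUV : U * (star U) = 1 := (Matrix.mem_unitaryGroup_iff).mp hA.eigenvectorUnitary.2
  have hVU : (star U) * U = 1 := (Matrix.mem_unitaryGroup_iff').mp hA.eigenvectorUnitary.2
  set f := (C : ℂ →+* ℂ[X]).mapMatrix (m := n)
  have key : A.charpoly = (Matrix.diagonal (RCLike.ofReal ∘ hA.eigenvalues)).charpoly := by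
    unfold Matrix.charpoly
    have hcm : charmatrix A =
        f U * charmatrix (Matrix.diagonal (RCLike.ofReal ∘ hA.eigenvalues)) * f (star U) := by
      rw [charmatrix, charmatrix, mul_sub, sub_mul]
      congr 1
      · rw [mul_assoc,
          (Matrix.scalar_commute (X : ℂ[X]) (fun r' => Commute.all _ _) (f (star U))).eq,
          ← mul_assoc, ← _root_.map_mul f, hUV]
        simp [f]
      · conv_lhs => rw [hs]
        rw [Unitary.conjStarAlgAut_apply, _root_.map_mul f, _root_.map_mul f]
    rw [hcm, Matrix.det_mul, Matrix.det_mul, mul_comm, ← mul_assoc, ← Matrix.det_mul,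
      ← _root_.map_mul f, hVU]
    simp [f]
  rw [key]
  unfold Matrix.charpoly
  have : charmatrix (Matrix.diagonal (RCLike.ofReal ∘ hA.eigenvalues)) =
      Matrix.diagonal (fun i => (X : ℂ[X]) - C ((hA.eigenvalues i : ℝ) : ℂ)) := by
    rw [charmatrix, Matrix.scalar_apply]
    ext i j
    by_cases h : i = j <;> simp [h, Matrix.diagonal]
  rw [this, Matrix.det_diagonal]

open Polynomial in
lemma roots_charpoly_hermitian {n : Type*} [Fintype n] [DecidableEq n]
    {A : Matrix n n ℂ} (hA : A.IsHermitian) :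
    A.charpoly.roots = Finset.univ.val.map (fun i => ((hA.eigenvalues i : ℝ) : ℂ)) := by
  rw [charpoly_hermitian hA, Finset.prod]
  have : (Multiset.map (fun i => (X : ℂ[X]) - C ((hA.eigenvalues i : ℝ) : ℂ)) Finset.univ.val)
      = Multiset.map (fun a => (X : ℂ[X]) - C a)
          (Finset.univ.val.map (fun i => ((hA.eigenvalues i : ℝ) : ℂ))) := by
    rw [Multiset.map_map]; rfl
  rw [this, roots_multiset_prod_X_sub_C]

lemma entropy_sum_eq_roots {k : Type*} [Fintype k] [DecidableEq k]
    (M : Matrix k k ℂ) (hM : M.IsHermitian) :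
    (∑ i, hM.eigenvalues i * Real.log (hM.eigenvalues i)) =
      (M.charpoly.roots.map (fun z : ℂ => z.re * Real.log z.re)).sum := by
  rw [roots_charpoly_hermitian hM, Multiset.map_map, Finset.sum]
  congr 1

lemma vNE_eq_of_charpoly_eq {n m : Type*} [Fintype n] [DecidableEq n] [Fintype m] [DecidableEq m]
    {A : Matrix n n ℂ} {B : Matrix m m ℂ} (hA : A.IsHermitian) (hB : B.IsHermitian)
    (h : A.charpoly = B.charpoly) : vNE A = vNE B := by
  rw [vNE, vNE, dif_pos hA, dif_pos hB, entropy_sum_eq_roots A hA, entropy_sum_eq_roots B hB, h]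

lemma vNE_submatrix {n m : Type*} [Fintype n] [DecidableEq n] [Fintype m] [DecidableEq m]
    (A : Matrix n n ℂ) (hA : A.IsHermitian) (e : m ≃ n) :
    vNE (A.submatrix e e) = vNE A := by
  have hB : (A.submatrix e e).IsHermitian := hA.submatrix e
  have : A.submatrix ⇑e ⇑e = Matrix.reindex e.symm e.symm A := rfl
  exact vNE_eq_of_charpoly_eq hB hA (by rw [this, Matrix.charpoly_reindex])

open Matrix in
lemma psiMinus_swap (p : Fin 2 × Fin 2) : psiMinus p.swap = -psiMinus p := by
  rcases p with ⟨i, j⟩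
  fin_cases i <;> fin_cases j <;> simp [psiMinus, Prod.swap, Prod.ext_iff]

lemma sum_conj_psi : ∑ p : Fin 2 × Fin 2, (starRingEnd ℂ) (psiMinus p) * psiMinus p = 1 := by
  have h2 : ((Real.sqrt 2 : ℂ))⁻¹ * ((Real.sqrt 2 : ℂ))⁻¹ = (2 : ℂ)⁻¹ := by
    rw [← mul_inv, ← Complex.ofReal_mul, Real.mul_self_sqrt (by norm_num : (0:ℝ) ≤ 2)]
    norm_num
  rw [Fintype.sum_prod_type]
  simp only [Fin.sum_univ_two, psiMinus, Prod.ext_iff, map_inv₀, Complex.conj_ofReal]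
  norm_num [h2]

open Matrix in
lemma trace_singletProj_mul (ρ : Matrix (Fin 2 × Fin 2) (Fin 2 × Fin 2) ℂ) :
    Matrix.trace (singletProj * ρ) = dotProduct (star psiMinus) (ρ *ᵥ psiMinus) := by
  rw [Matrix.trace]
  simp only [Matrix.diag_apply, Matrix.mul_apply, dotProduct, Matrix.mulVec, singletProj,
    Matrix.of_apply, Pi.star_apply, RCLike.star_def]
  rw [Finset.sum_comm]
  refine Finset.sum_congr rfl fun q _ => ?_
  rw [Finset.mul_sum]
  refine Finset.sum_congr rfl fun p _ => ?_
  ring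

open Matrix in
lemma singletProj_posSemidef : singletProj.PosSemidef := by
  refine Matrix.posSemidef_iff_dotProduct_mulVec.mpr ⟨?_, ?_⟩
  · ext p q
    simp [singletProj, Matrix.conjTranspose_apply, mul_comm]
  · intro x
    have key : dotProduct (star x) (singletProj *ᵥ x)
        = star (∑ p, (starRingEnd ℂ) (psiMinus p) * x p)
          * (∑ p, (starRingEnd ℂ) (psiMinus p) * x p) := by
      have hstar : star (∑ p, (starRingEnd ℂ) (psiMinus p) * x p)
          = ∑ q, psiMinus q * (starRingEnd ℂ) (x q) := by
        rw [star_sum]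
        refine Finset.sum_congr rfl fun q _ => ?_
        simp [star_mul', RCLike.star_def, mul_comm]
      rw [hstar, Finset.sum_mul_sum]
      simp only [dotProduct, Matrix.mulVec, singletProj, Matrix.of_apply, Pi.star_apply,
        RCLike.star_def]
      refine Finset.sum_congr rfl fun q _ => ?_
      rw [Finset.mul_sum]
      refine Finset.sum_congr rfl fun p _ => ?_
      ring
    rw [key]
    exact star_mul_self_nonneg _

open Matrix in
lemma singletProj_mul_self : singletProj * singletProj = singletProj := by
  ext p q
  simp only [Matrix.mul_apply, singletProj, Matrix.of_apply]
  have : ∀ r : Fin 2 × Fin 2, psiMinus p * (starRingEnd ℂ) (psiMinus r)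
      * (psiMinus r * (starRingEnd ℂ) (psiMinus q))
      = (psiMinus p * (starRingEnd ℂ) (psiMinus q)) * ((starRingEnd ℂ) (psiMinus r) * psiMinus r) := by
    intro r; ring
  simp only [this, ← Finset.mul_sum, sum_conj_psi, mul_one]

open Matrix in
lemma trace_psd_nonneg {n : Type*} [Fintype n] [DecidableEq n]
    {A : Matrix n n ℂ} (hA : A.PosSemidef) : 0 ≤ A.trace := by
  rw [Matrix.trace]
  refine Finset.sum_nonneg fun i _ => ?_
  have := hA.dotProduct_mulVec_nonneg (Pi.single i 1)
  simpa [dotProduct, Matrix.mulVec, Pi.single_apply, Finset.sum_ite_eq,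
    Matrix.diag_apply] using this

open Matrix in
lemma trace_mul_psd_nonneg {n : Type*} [Fintype n] [DecidableEq n]
    {A B : Matrix n n ℂ} (hA : A.PosSemidef) (hB : B.PosSemidef) :
    0 ≤ (A * B).trace := by
  open scoped MatrixOrder Matrix.Norms.L2Operator in
  obtain ⟨C, rfl⟩ := CStarAlgebra.nonneg_iff_eq_star_mul_self.mp hA.nonneg
  rw [mul_assoc, Matrix.trace_mul_comm]
  exact trace_psd_nonneg (hB.mul_mul_conjTranspose_same C)

open Matrix in
lemma trace_singletProj_re_mem (ρ : Matrix (Fin 2 × Fin 2) (Fin 2 × Fin 2) ℂ)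
    (hρ : IsDensityOp ρ) :
    0 ≤ (Matrix.trace (singletProj * ρ)).re ∧ (Matrix.trace (singletProj * ρ)).re ≤ 1 := by
  have h1 : 0 ≤ Matrix.trace (singletProj * ρ) :=
    trace_mul_psd_nonneg singletProj_posSemidef hρ.1
  constructor
  · exact (Complex.le_def.mp h1).1
  · have hproj : (1 - singletProj).PosSemidef := by
      have : (1 - singletProj) = (1 - singletProj)ᴴ * (1 - singletProj) := by
        rw [Matrix.conjTranspose_sub, Matrix.conjTranspose_one, singletProj_posSemidef.1,
          sub_mul, mul_sub, mul_sub, mul_one, one_mul, singletProj_mul_self, Matrix.mul_one]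
        abel
      rw [this]
      exact Matrix.posSemidef_conjTranspose_mul_self _
    have h2 : 0 ≤ ((1 - singletProj) * ρ).trace := trace_mul_psd_nonneg hproj hρ.1
    have h3 : ((1 - singletProj) * ρ).trace = 1 - (singletProj * ρ).trace := by
      rw [sub_mul, Matrix.trace_sub, one_mul, hρ.2]
    rw [h3] at h2
    have := (Complex.le_def.mp h2).1
    simp only [Complex.sub_re, Complex.one_re, Complex.zero_re] at this
    linarith

open Matrix in
lemma ptraceL_swap (ρ : Matrix ((Fin 2) × (Fin 2)) ((Fin 2) × (Fin 2)) ℂ) :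
    ptraceL (Matrix.of fun p q => ρ p.swap q.swap) = ptraceR ρ := by
  ext i j
  simp [ptraceL, ptraceR]

open Matrix in
lemma ptraceR_swap (ρ : Matrix ((Fin 2) × (Fin 2)) ((Fin 2) × (Fin 2)) ℂ) :
    ptraceR (Matrix.of fun p q => ρ p.swap q.swap) = ptraceL ρ := by
  ext i j
  simp [ptraceL, ptraceR]

open Matrix in
lemma swap_eq_submatrix (ρ : Matrix ((Fin 2) × (Fin 2)) ((Fin 2) × (Fin 2)) ℂ) :
    (Matrix.of fun p q => ρ p.swap q.swap)
      = ρ.submatrix ⇑(Equiv.prodComm (Fin 2) (Fin 2)) ⇑(Equiv.prodComm (Fin 2) (Fin 2)) := rfl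

open Matrix in
lemma isDensityOp_swap {ρ : Matrix ((Fin 2) × (Fin 2)) ((Fin 2) × (Fin 2)) ℂ}
    (hρ : IsDensityOp ρ) : IsDensityOp ((Matrix.of fun p q => ρ p.swap q.swap) : Matrix ((Fin 2) × (Fin 2)) ((Fin 2) × (Fin 2)) ℂ) := by
  constructor
  · rw [swap_eq_submatrix]
    exact hρ.1.submatrix _
  · rw [swap_eq_submatrix, ← hρ.2, Matrix.trace, Matrix.trace]
    exact Equiv.sum_comp (Equiv.prodComm (Fin 2) (Fin 2)) (fun p => ρ p p)

open Matrix in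
lemma vNE_swap {ρ : Matrix ((Fin 2) × (Fin 2)) ((Fin 2) × (Fin 2)) ℂ}
    (hρ : ρ.IsHermitian) : vNE ((Matrix.of fun p q => ρ p.swap q.swap) : Matrix ((Fin 2) × (Fin 2)) ((Fin 2) × (Fin 2)) ℂ) = vNE ρ := by
  rw [swap_eq_submatrix]
  exact vNE_submatrix ρ hρ (Equiv.prodComm (Fin 2) (Fin 2))

open Matrix in
lemma trace_singletProj_swap (ρ : Matrix ((Fin 2) × (Fin 2)) ((Fin 2) × (Fin 2)) ℂ) :
    Matrix.trace (singletProj * Matrix.of fun p q => ρ p.swap q.swap)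
      = Matrix.trace (singletProj * ρ) := by
  rw [trace_singletProj_mul, trace_singletProj_mul]
  simp only [dotProduct, Matrix.mulVec, Matrix.of_apply, Pi.star_apply]
  refine Fintype.sum_equiv (Equiv.prodComm (Fin 2) (Fin 2)) _ _ fun q => ?_
  simp only [Equiv.prodComm_apply]
  have inner : (∑ p, ρ q.swap p.swap * psiMinus p) = -∑ p, ρ q.swap p * psiMinus p := by
    rw [← Finset.sum_neg_distrib]
    refine Fintype.sum_equiv (Equiv.prodComm (Fin 2) (Fin 2)) _ _ fun p => ?_
    simp only [Equiv.prodComm_apply, Prod.swap_swap]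
    rw [show psiMinus p = -psiMinus p.swap by rw [psiMinus_swap p]; ring]
    ring
  rw [inner, show star (psiMinus q.swap) = -star (psiMinus q) by rw [psiMinus_swap q]; simp]
  ring

section Comb

variable {V : Type*} [Fintype V] [DecidableEq V] (G : SimpleGraph V) [DecidableRel G.Adj]

private def fib (f : Sym2 V → V) (y : V) : Finset (Sym2 V) :=
  G.edgeFinset.filter (fun e => f e = y)

lemma flip_edge (f : Sym2 V → V) (hf : ∀ e ∈ G.edgeFinset, f e ∈ e) {a b : V}
    (hab : G.Adj a b) :
    ∃ f' : Sym2 V → V, (∀ e ∈ G.edgeFinset, f' e ∈ e) ∧ ∀ y : V,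
      ((fib G f' y).card : ZMod 2)
        = ((fib G f y).card : ZMod 2)
          + (if y = a then 1 else 0) + (if y = b then 1 else 0) := by
  set e₀ : Sym2 V := s(a, b) with he₀def
  have he₀ : e₀ ∈ G.edgeFinset := by
    rw [SimpleGraph.mem_edgeFinset, he₀def, SimpleGraph.mem_edgeSet]; exact hab
  have hfe₀ : f e₀ = a ∨ f e₀ = b := by
    have := hf e₀ he₀
    rwa [he₀def, Sym2.mem_iff] at this
  have hab' : a ≠ b := hab.ne
  set c : V := if f e₀ = a then b else a with hc
  refine ⟨Function.update f e₀ c, ?_, ?_⟩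
  · intro e he
    by_cases h : e = e₀
    · subst h
      rw [Function.update_self, hc]
      split_ifs <;> simp [he₀def, Sym2.mem_iff]
    · rw [Function.update_of_ne h]
      exact hf e he
  · intro y
    have hsplit : ∀ g : Sym2 V → V, (fib G g y).card
        = ((G.edgeFinset.erase e₀).filter (fun e => g e = y)).card
          + (if g e₀ = y then 1 else 0) := by
      intro g
      show (G.edgeFinset.filter (fun e => g e = y)).card = _
      conv_lhs => rw [← Finset.insert_erase he₀]
      rw [Finset.filter_insert]
      split_ifs with h
      · rw [Finset.card_insert_of_notMem (by simp)]
      · simp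
    have hsame : ((G.edgeFinset.erase e₀).filter (fun e => Function.update f e₀ c e = y))
        = ((G.edgeFinset.erase e₀).filter (fun e => f e = y)) := by
      apply Finset.filter_congr
      intro e he
      rw [Function.update_of_ne (Finset.ne_of_mem_erase he)]
    rw [hsplit, hsplit, hsame, Function.update_self]
    push_cast
    have hcomm : ∀ (z : V), (if z = y then (1 : ZMod 2) else 0) = (if y = z then 1 else 0) :=
      fun z => if_congr eq_comm rfl rfl
    rcases hfe₀ with h | h
    · have hcc : c = b := by rw [hc, if_pos h]
      rw [h, hcc, hcomm a, hcomm b]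
      generalize ((Finset.filter (fun e => f e = y) (G.edgeFinset.erase e₀)).card : ZMod 2) = t
      generalize (if y = a then (1 : ZMod 2) else 0) = A
      generalize (if y = b then (1 : ZMod 2) else 0) = B
      revert t A B; decide
    · have hcc : c = a := by
        rw [hc, if_neg]
        intro h'
        exact hab' (h'.symm.trans h)
      rw [h, hcc, hcomm a, hcomm b]
      generalize ((Finset.filter (fun e => f e = y) (G.edgeFinset.erase e₀)).card : ZMod 2) = t
      generalize (if y = a then (1 : ZMod 2) else 0) = A
      generalize (if y = b then (1 : ZMod 2) else 0) = B
      revert t A B; decide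

lemma flip_walk (f : Sym2 V → V) (hf : ∀ e ∈ G.edgeFinset, f e ∈ e) {u r : V}
    (w : G.Walk u r) :
    ∃ f' : Sym2 V → V, (∀ e ∈ G.edgeFinset, f' e ∈ e) ∧ ∀ y : V,
      ((fib G f' y).card : ZMod 2)
        = ((fib G f y).card : ZMod 2)
          + (if y = u then 1 else 0) + (if y = r then 1 else 0) := by
  induction w generalizing f with
  | nil =>
    refine ⟨f, hf, fun y => ?_⟩
    generalize ((fib G f y).card : ZMod 2) = t
    generalize (if y = _ then (1 : ZMod 2) else 0) = A
    revert t A; decide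
  | @cons u x r hadj p ih =>
    obtain ⟨f₁, hf₁, hΔ₁⟩ := flip_edge G f hf hadj
    obtain ⟨f₂, hf₂, hΔ₂⟩ := ih f₁ hf₁
    refine ⟨f₂, hf₂, fun y => ?_⟩
    rw [hΔ₂ y, hΔ₁ y]
    generalize ((fib G f y).card : ZMod 2) = t
    generalize (if y = u then (1 : ZMod 2) else 0) = A
    generalize (if y = x then (1 : ZMod 2) else 0) = B
    generalize (if y = r then (1 : ZMod 2) else 0) = C
    revert t A B C; decide

lemma exists_parity_assignment (hG : G.Connected) (r : V) :
    ∃ f : Sym2 V → V, (∀ e ∈ G.edgeFinset, f e ∈ e) ∧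
      ∀ v, v ≠ r → Even (fib G f v).card := by
  classical
  have E2 : ∀ k : ℕ, Even k ↔ (k : ZMod 2) = 0 := by
    intro k
    rw [ZMod.natCast_eq_zero_iff, Nat.even_iff, Nat.dvd_iff_mod_eq_zero]
  suffices h : ∀ (n : ℕ) (f : Sym2 V → V), (∀ e ∈ G.edgeFinset, f e ∈ e) →
      (Finset.univ.filter (fun v => v ≠ r ∧ ¬ Even (fib G f v).card)).card = n →
      ∃ f' : Sym2 V → V, (∀ e ∈ G.edgeFinset, f' e ∈ e) ∧
        ∀ v, v ≠ r → Even (fib G f' v).card by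
    exact h _ (fun e => e.out.1) (fun e _ => Sym2.out_fst_mem e) rfl
  intro n
  induction n with
  | zero =>
    intro f hf hcard
    refine ⟨f, hf, fun v hv => ?_⟩
    by_contra hodd
    have hmem : v ∈ Finset.univ.filter (fun v => v ≠ r ∧ ¬ Even (fib G f v).card) :=
      Finset.mem_filter.mpr ⟨Finset.mem_univ v, hv, hodd⟩
    rw [Finset.card_eq_zero] at hcard
    rw [hcard] at hmem
    exact absurd hmem (Finset.notMem_empty v)
  | succ n ih =>
    intro f hf hcard
    have hne : (Finset.univ.filter (fun v => v ≠ r ∧ ¬ Even (fib G f v).card)).Nonempty := by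
      rw [← Finset.card_pos, hcard]; omega
    obtain ⟨v, hv⟩ := hne
    rw [Finset.mem_filter] at hv
    obtain ⟨-, hvr, hvodd⟩ := hv
    obtain ⟨w⟩ := hG.preconnected v r
    obtain ⟨f', hf', hΔ⟩ := flip_walk G f hf w
    refine ih f' hf' ?_
    have hone : ∀ t : ZMod 2, t ≠ 0 → t = 1 := by decide
    have hveven : Even (fib G f' v).card := by
      rw [E2]
      have h2 := hΔ v
      rw [if_pos rfl, if_neg hvr, add_zero] at h2
      have h3 : ((fib G f v).card : ZMod 2) = 1 :=
        hone _ (fun h0 => hvodd ((E2 _).mpr h0))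
      rw [h2, h3]
      decide
    have hsame : ∀ y, y ≠ r → y ≠ v → (Even (fib G f' y).card ↔ Even (fib G f y).card) := by
      intro y h1 h2
      rw [E2, E2]
      have h3 := hΔ y
      rw [if_neg h2, if_neg h1, add_zero, add_zero] at h3
      rw [h3]
    have hset : Finset.univ.filter (fun y => y ≠ r ∧ ¬ Even (fib G f' y).card)
        = (Finset.univ.filter (fun y => y ≠ r ∧ ¬ Even (fib G f y).card)).erase v := by
      ext y
      simp only [Finset.mem_erase, Finset.mem_filter, Finset.mem_univ, true_and]
      constructor
      · rintro ⟨hyr, hodd'⟩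
        have hyv : y ≠ v := fun h => hodd' (h ▸ hveven)
        exact ⟨hyv, hyr, fun he => hodd' ((hsame y hyr hyv).mpr he)⟩
      · rintro ⟨hyv, hyr, hodd'⟩
        exact ⟨hyr, fun he => hodd' ((hsame y hyr hyv).mp he)⟩
    rw [hset, Finset.card_erase_of_mem
      (Finset.mem_filter.mpr ⟨Finset.mem_univ v, hvr, hvodd⟩), hcard]
    omega

end Comb

open Matrix in
lemma cWM_bddBelow : BddBelow { x : ℝ | ∃ ρ12 ρ23 : Matrix (Fin 2 × Fin 2) (Fin 2 × Fin 2) ℂ,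
    IsDensityOp ρ12 ∧ IsDensityOp ρ23 ∧
    ptraceL ρ12 = ptraceR ρ23 ∧
    0 ≤ (vNE ρ12 - vNE (ptraceR ρ12)) + (vNE ρ23 - vNE (ptraceL ρ23)) ∧
    x = -(1 / 2) * ((Matrix.trace (singletProj * ρ12)).re
      + (Matrix.trace (singletProj * ρ23)).re) } := by
  refine ⟨-1, fun x hx => ?_⟩
  obtain ⟨ρ12, ρ23, h1, h2, -, -, hx⟩ := hx
  have b1 := trace_singletProj_re_mem ρ12 h1
  have b2 := trace_singletProj_re_mem ρ23 h2
  rw [hx]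
  linarith [b1.1, b1.2, b2.1, b2.2]

open Matrix in
lemma cWM_le_pair (σ τ : Matrix (Fin 2 × Fin 2) (Fin 2 × Fin 2) ℂ)
    (hσ : IsDensityOp σ) (hτ : IsDensityOp τ)
    (hcons : ptraceR σ = ptraceR τ)
    (hwm : 0 ≤ (vNE σ - vNE (ptraceL σ)) + (vNE τ - vNE (ptraceL τ))) :
    2 * cWM ≤ -(Matrix.trace (singletProj * σ)).re + -(Matrix.trace (singletProj * τ)).re := by
  have hle : cWM ≤ -(1 / 2) * ((Matrix.trace (singletProj * σ)).re
      + (Matrix.trace (singletProj * τ)).re) := by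
    apply csInf_le cWM_bddBelow
    refine ⟨(Matrix.of fun p q => σ p.swap q.swap), τ, isDensityOp_swap hσ, hτ, ?_, ?_, ?_⟩
    · rw [ptraceL_swap, hcons]
    · rw [vNE_swap hσ.1.1, ptraceR_swap]
      exact hwm
    · rw [trace_singletProj_swap]
  linarith

/-- For the anti-ferromagnetic Hamiltonian `H = Σ_{e∈E} -|ψ⁻⟩⟨ψ⁻|_e` on a finite connected
graph, any locally consistent family of two-qubit edge marginals `(ρ_e)` (with factors
associated to the endpoints, encoded by an oriented family `ρ v w` with the swap symmetry)
satisfying all weak monotonicity constraints `S(v|j) + S(v|k) ≥ 0` has energy at least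
`2c⌊|E|/2⌋ - (|E| mod 2)`. The edge energies are encoded by any `F : Sym2 V → ℝ` that agrees
with `-⟨ψ⁻|ρ_{vw}|ψ⁻⟩` on every edge. -/
theorem energy_lower_bound_from_weak_monotonicity {V : Type*} [Fintype V] [DecidableEq V]
    (G : SimpleGraph V) [DecidableRel G.Adj] (hG : G.Connected)
    (hE : 1 ≤ G.edgeFinset.card)
    (ρ : V → V → Matrix (Fin 2 × Fin 2) (Fin 2 × Fin 2) ℂ)
    (hdens : ∀ v w, G.Adj v w → IsDensityOp (ρ v w))
    (hsym : ∀ v w, G.Adj v w →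
      ρ w v = Matrix.of fun p q => ρ v w p.swap q.swap)
    (hcons : ∀ v w w', G.Adj v w → G.Adj v w' →
      ptraceR (ρ v w) = ptraceR (ρ v w'))
    (hWM : ∀ v w w', G.Adj v w → G.Adj v w' → w ≠ w' →
      0 ≤ (vNE (ρ v w) - vNE (ptraceL (ρ v w)))
        + (vNE (ρ v w') - vNE (ptraceL (ρ v w'))))
    (F : Sym2 V → ℝ)
    (hF : ∀ v w, G.Adj v w → F s(v, w) = -(Matrix.trace (singletProj * ρ v w)).re) :
    2 * cWM * ((G.edgeFinset.card / 2 : ℕ) : ℝ) - ((G.edgeFinset.card % 2 : ℕ) : ℝ)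
      ≤ ∑ e ∈ G.edgeFinset, F e := by
  classical
  obtain ⟨r⟩ := hG.nonempty
  obtain ⟨f, hfmem, hfeven'⟩ := exists_parity_assignment G hG r
  have hfeven : ∀ v, v ≠ r → Even ((G.edgeFinset.filter (fun e => f e = v)).card) := hfeven'
  -- the two-edge bound
  have pair : ∀ e₁ ∈ G.edgeFinset, ∀ e₂ ∈ G.edgeFinset, e₁ ≠ e₂ →
      ∀ v, v ∈ e₁ → v ∈ e₂ → 2 * cWM ≤ F e₁ + F e₂ := by
    intro e₁ h₁ e₂ h₂ hne v hv₁ hv₂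
    have he₁ : s(v, Sym2.Mem.other hv₁) = e₁ := Sym2.other_spec hv₁
    have he₂ : s(v, Sym2.Mem.other hv₂) = e₂ := Sym2.other_spec hv₂
    have hadj₁ : G.Adj v (Sym2.Mem.other hv₁) := by
      rw [← SimpleGraph.mem_edgeSet, he₁]
      exact SimpleGraph.mem_edgeFinset.mp h₁
    have hadj₂ : G.Adj v (Sym2.Mem.other hv₂) := by
      rw [← SimpleGraph.mem_edgeSet, he₂]
      exact SimpleGraph.mem_edgeFinset.mp h₂
    have hww' : Sym2.Mem.other hv₁ ≠ Sym2.Mem.other hv₂ := by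
      intro h
      exact hne (by rw [← he₁, ← he₂, h])
    have hb := cWM_le_pair (ρ v (Sym2.Mem.other hv₁)) (ρ v (Sym2.Mem.other hv₂))
      (hdens _ _ hadj₁) (hdens _ _ hadj₂) (hcons _ _ _ hadj₁ hadj₂)
      (hWM _ _ _ hadj₁ hadj₂ hww')
    rw [← he₁, ← he₂, hF _ _ hadj₁, hF _ _ hadj₂]
    linarith
  -- the single-edge bound
  have single : ∀ e ∈ G.edgeFinset, -1 ≤ F e := by
    intro e he
    induction e using Sym2.ind with
    | _ v w =>
      have hadj : G.Adj v w := (G.mem_edgeSet).mp (SimpleGraph.mem_edgeFinset.mp he)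
      rw [hF v w hadj]
      have := (trace_singletProj_re_mem (ρ v w) (hdens v w hadj)).2
      linarith
  -- even-fibered subsets
  have evenbound : ∀ (k : ℕ) (S : Finset (Sym2 V)), S.card = k → S ⊆ G.edgeFinset →
      (∀ v : V, Even ((S.filter (fun e => f e = v)).card)) →
      cWM * (S.card : ℝ) ≤ ∑ e ∈ S, F e := by
    intro k
    induction k using Nat.strong_induction_on with
    | _ k ihk =>
      intro S hSk hSsub hSeven
      rcases Finset.eq_empty_or_nonempty S with rfl | ⟨e₁, he₁⟩
      · simp
      · have hv : f e₁ ∈ e₁ := hfmem e₁ (hSsub he₁)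
        have he₁f : e₁ ∈ S.filter (fun e => f e = f e₁) :=
          Finset.mem_filter.mpr ⟨he₁, rfl⟩
        have hcard2 : 1 < (S.filter (fun e => f e = f e₁)).card := by
          rcases hSeven (f e₁) with ⟨t, ht⟩
          have h1 : 0 < (S.filter (fun e => f e = f e₁)).card :=
            Finset.card_pos.mpr ⟨e₁, he₁f⟩
          omega
        obtain ⟨e₂, he₂f, hne⟩ := Finset.exists_mem_ne hcard2 e₁
        have he₂ : e₂ ∈ S := (Finset.mem_filter.mp he₂f).1
        have hfe₂ : f e₂ = f e₁ := (Finset.mem_filter.mp he₂f).2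
        have hv₂ : f e₁ ∈ e₂ := hfe₂ ▸ hfmem e₂ (hSsub he₂)
        have he₂e : e₂ ∈ S.erase e₁ := Finset.mem_erase.mpr ⟨hne, he₂⟩
        have hk2 : 2 ≤ k := by
          have := Finset.card_le_card (Finset.filter_subset (fun e => f e = f e₁) S)
          omega
        have hcardS' : ((S.erase e₁).erase e₂).card = k - 2 := by
          rw [Finset.card_erase_of_mem he₂e, Finset.card_erase_of_mem he₁, hSk]
          omega
        have hS'even : ∀ u : V,
            Even ((((S.erase e₁).erase e₂).filter (fun e => f e = u)).card) := by
          intro u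
          by_cases hu : u = f e₁
          · subst hu
            have hfilter : ((S.erase e₁).erase e₂).filter (fun e => f e = f e₁)
                = ((S.filter (fun e => f e = f e₁)).erase e₁).erase e₂ := by
              ext e
              simp only [Finset.mem_filter, Finset.mem_erase]
              tauto
            rw [hfilter, Finset.card_erase_of_mem
                (Finset.mem_erase.mpr ⟨hne, he₂f⟩),
              Finset.card_erase_of_mem he₁f]
            rcases hSeven (f e₁) with ⟨t, ht⟩
            refine ⟨t - 1, ?_⟩
            omega
          · have hfilter : ((S.erase e₁).erase e₂).filter (fun e => f e = u)
                = S.filter (fun e => f e = u) := by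
              ext e
              simp only [Finset.mem_filter, Finset.mem_erase]
              constructor
              · tauto
              · rintro ⟨heS, hfu⟩
                refine ⟨⟨?_, ?_, heS⟩, hfu⟩
                · rintro rfl
                  exact hu (hfu ▸ hfe₂.symm).symm
                · rintro rfl
                  exact hu hfu.symm
            rw [hfilter]
            exact hSeven u
        have IH := ihk (k - 2) (by omega) ((S.erase e₁).erase e₂) hcardS'
          (fun e he => hSsub (Finset.mem_of_mem_erase (Finset.mem_of_mem_erase he)))
          hS'even
        have hsum : ∑ e ∈ S, F e = (∑ e ∈ (S.erase e₁).erase e₂, F e) + F e₂ + F e₁ := by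
          rw [Finset.sum_erase_add _ _ he₂e, Finset.sum_erase_add _ _ he₁]
        have hpair := pair e₁ (hSsub he₁) e₂ (hSsub he₂) (Ne.symm hne) (f e₁) hv hv₂
        have hcast : ((k - 2 : ℕ) : ℝ) = (k : ℝ) - 2 := by
          push_cast [hk2]
          ring
        rw [hsum, hSk]
        rw [hcardS', hcast] at IH
        nlinarith [IH, hpair]
  -- conclude
  set m := G.edgeFinset.card with hm
  have hmsum : G.edgeFinset.card
      = ∑ v : V, ((G.edgeFinset.filter (fun e => f e = v)).card) :=
    Finset.card_eq_sum_card_fiberwise (fun e _ => Finset.mem_univ (f e))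
  by_cases hre : Even ((G.edgeFinset.filter (fun e => f e = r)).card)
  · -- all fibers even
    have hallEven : ∀ v : V, Even ((G.edgeFinset.filter (fun e => f e = v)).card) := by
      intro v
      by_cases hvr : v = r
      · subst hvr; exact hre
      · exact hfeven v hvr
    have hb := evenbound m G.edgeFinset rfl le_rfl.subset hallEven
    have hmeven : Even m := by
      rw [hm, hmsum]
      exact Finset.even_sum _ (fun v _ => hallEven v)
    obtain ⟨t, ht⟩ := hmeven
    have h1 : m % 2 = 0 := by omega
    have h2 : m / 2 = t := by omega
    rw [h1, h2]
    have : ((m : ℕ) : ℝ) = 2 * (t : ℝ) := by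
      rw [ht]; push_cast; ring
    rw [this] at hb
    push_cast
    linarith
  · -- fiber at r is odd
    have hrodd : Odd ((G.edgeFinset.filter (fun e => f e = r)).card) :=
      Nat.odd_iff.mpr (by
        rcases Nat.even_or_odd ((G.edgeFinset.filter (fun e => f e = r)).card) with h | h
        · exact absurd h hre
        · exact Nat.odd_iff.mp h)
    obtain ⟨estar, hestar⟩ : (G.edgeFinset.filter (fun e => f e = r)).Nonempty := by
      rw [← Finset.card_pos]
      rcases hrodd with ⟨t, ht⟩
      omega
    have hestarE : estar ∈ G.edgeFinset := (Finset.mem_filter.mp hestar).1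
    have hfestar : f estar = r := (Finset.mem_filter.mp hestar).2
    set S := G.edgeFinset.erase estar with hS
    have hScard : S.card = m - 1 := Finset.card_erase_of_mem hestarE
    have hSeven : ∀ v : V, Even ((S.filter (fun e => f e = v)).card) := by
      intro v
      by_cases hvr : v = r
      · subst hvr
        have hfilter : S.filter (fun e => f e = v)
            = (G.edgeFinset.filter (fun e => f e = v)).erase estar := by
          ext e
          simp only [hS, Finset.mem_filter, Finset.mem_erase]
          tauto
        rw [hfilter, Finset.card_erase_of_mem hestar]
        rcases hrodd with ⟨t, ht⟩
        exact ⟨t, by omega⟩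
      · have hfilter : S.filter (fun e => f e = v)
            = G.edgeFinset.filter (fun e => f e = v) := by
          ext e
          simp only [hS, Finset.mem_filter, Finset.mem_erase]
          constructor
          · tauto
          · rintro ⟨heS, hfv⟩
            exact ⟨⟨by rintro rfl; exact hvr (hfv ▸ hfestar ▸ rfl), heS⟩, hfv⟩
        rw [hfilter]
        exact hfeven v hvr
    have hb := evenbound (m - 1) S hScard (Finset.erase_subset _ _) hSeven
    have hsum : ∑ e ∈ G.edgeFinset, F e = (∑ e ∈ S, F e) + F estar :=
      (Finset.sum_erase_add _ _ hestarE).symm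
    have hsingle := single estar hestarE
    have hmodd : Odd m := by
      have hsplit : m = (∑ v ∈ Finset.univ.erase r,
            (G.edgeFinset.filter (fun e => f e = v)).card)
          + (G.edgeFinset.filter (fun e => f e = r)).card := by
        rw [hm, hmsum, ← Finset.sum_erase_add _ _ (Finset.mem_univ r)]
      have heven : Even (∑ v ∈ Finset.univ.erase r,
          (G.edgeFinset.filter (fun e => f e = v)).card) :=
        Finset.even_sum _ (fun v hv => hfeven v (Finset.ne_of_mem_erase hv))
      rcases heven with ⟨t, ht⟩
      rcases hrodd with ⟨s', hs'⟩
      exact ⟨t + s', by omega⟩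
    obtain ⟨t, ht⟩ := hmodd
    have h1 : m % 2 = 1 := by omega
    have h2 : m / 2 = t := by omega
    have hm1 : ((m - 1 : ℕ) : ℝ) = 2 * (t : ℝ) := by
      have : m - 1 = 2 * t := by omega
      rw [this]; push_cast; ring
    rw [h1, h2, hsum]
    rw [hScard, hm1] at hb
    push_cast
    nlinarith [hb, hsingle]

end
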